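/- Let k, m ≥ 2 and q = ⌈k/m⌉. Then the smallest index α(k) achieving the maximum of C_{k,q},...,C_{k,k} satisfies α(k) ≤ (k+q)/2. -/

import Mathlib

open Finset

def C (m k ℓ : ℕ) : ℕ :=
  (Finset.univ.filter (fun f : Fin ℓ → Fin m => ∑ i, ((f i : ℕ) + 1) = k)).card

noncomputable def alpha (m k : ℕ) : ℕ :=
  sInf {i | i ∈ Finset.Icc ((k + m - 1) / m) k ∧
    C m k i = (Finset.Icc ((k + m - 1) / m) k).sup (C m k)}

/-- Merge the adjacent parts at positions `j, j+1`. -/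
def mrg {m ℓ : ℕ} (a : Fin (ℓ+1) → Fin m) (j : Fin ℓ) : Fin ℓ → Fin m :=
  fun i => if i = j then
    ⟨min (m-1) ((a j.castSucc : ℕ) + (a j.succ : ℕ) + 1),
      lt_of_le_of_lt (Nat.min_le_left _ _) (by have h := (a j.castSucc).isLt; omega)⟩
  else a (j.succ.succAbove i)

lemma succAbove_succ_self {ℓ : ℕ} (j : Fin ℓ) :
    (j.succ : Fin (ℓ+1)).succAbove j = j.castSucc :=
  Fin.succAbove_of_castSucc_lt _ _ Fin.castSucc_lt_succ

lemma mrg_val_self {m ℓ : ℕ} (a : Fin (ℓ+1) → Fin m) (j : Fin ℓ)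
    (hg : (a j.castSucc : ℕ) + (a j.succ : ℕ) + 2 ≤ m) :
    (mrg a j j : ℕ) = (a j.castSucc : ℕ) + (a j.succ : ℕ) + 1 := by
  have h : (mrg a j j : ℕ) = min (m-1) ((a j.castSucc : ℕ) + (a j.succ : ℕ) + 1) := by
    simp [mrg]
  omega

lemma mrg_sum {m ℓ k : ℕ} (a : Fin (ℓ+1) → Fin m) (j : Fin ℓ)
    (hg : (a j.castSucc : ℕ) + (a j.succ : ℕ) + 2 ≤ m)
    (ha : ∑ i, ((a i : ℕ) + 1) = k) :
    ∑ i, ((mrg a j i : ℕ) + 1) = k := by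
  have h1 : ∑ i : Fin (ℓ+1), ((a i : ℕ)+1)
      = ((a j.succ : ℕ)+1) + ∑ i : Fin ℓ, ((a (Fin.succAbove j.succ i) : ℕ)+1) :=
    Fin.sum_univ_succAbove (fun i => (a i : ℕ)+1) j.succ
  have h2 : ((mrg a j j : ℕ)+1) + ∑ i ∈ univ.erase j, ((mrg a j i : ℕ)+1)
      = ∑ i : Fin ℓ, ((mrg a j i : ℕ)+1) :=
    Finset.add_sum_erase univ (fun i => ((mrg a j i : ℕ)+1)) (mem_univ j)
  have h3 : ((a (Fin.succAbove j.succ j) : ℕ)+1)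
        + ∑ i ∈ univ.erase j, ((a (Fin.succAbove j.succ i) : ℕ)+1)
      = ∑ i : Fin ℓ, ((a (Fin.succAbove j.succ i) : ℕ)+1) :=
    Finset.add_sum_erase univ (fun i => ((a (Fin.succAbove j.succ i) : ℕ)+1)) (mem_univ j)
  have h4 : ∑ i ∈ univ.erase j, ((mrg a j i : ℕ)+1)
      = ∑ i ∈ univ.erase j, ((a (Fin.succAbove j.succ i) : ℕ)+1) := by
    refine Finset.sum_congr rfl (fun i hi => ?_)
    have hij : i ≠ j := (Finset.mem_erase.mp hi).1
    simp [mrg, hij]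
  have h5 : (mrg a j j : ℕ) = (a j.castSucc : ℕ) + (a j.succ : ℕ) + 1 :=
    mrg_val_self a j hg
  rw [succAbove_succ_self] at h3
  omega

lemma many_good {m k ℓ : ℕ} (hm : 2 ≤ m) (hq : k + (k+m-1)/m ≤ 2*ℓ + 1)
    (a : Fin (ℓ+1) → Fin m) (ha : ∑ i, ((a i : ℕ) + 1) = k) :
    k - ℓ ≤ (univ.filter (fun j : Fin ℓ =>
      (a j.castSucc : ℕ) + (a j.succ : ℕ) + 2 ≤ m)).card := by
  set q := (k+m-1)/m with hqdef
  have ht : (∑ i, (a i : ℕ)) + (ℓ+1) = k := by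
    rw [← ha, Finset.sum_add_distrib, Finset.sum_const, card_univ, Fintype.card_fin,
      smul_eq_mul, mul_one]
  set t := ∑ i, (a i : ℕ) with htdef
  have hmq : k ≤ m * q := by
    rw [hqdef]
    have h1 := Nat.div_add_mod (k+m-1) m
    have h2 : (k+m-1) % m < m := Nat.mod_lt _ (by omega)
    omega
  set G := univ.filter (fun j : Fin ℓ => (a j.castSucc : ℕ) + (a j.succ : ℕ) + 2 ≤ m) with hG
  set Bd := univ.filter (fun j : Fin ℓ => ¬ ((a j.castSucc : ℕ) + (a j.succ : ℕ) + 2 ≤ m)) with hB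
  have hGB : G.card + Bd.card = ℓ := by
    rw [hG, hB, Finset.card_filter_add_card_filter_not, card_univ, Fintype.card_fin]
  have hbound : (m-1) * Bd.card ≤ 2 * t := by
    calc (m-1) * Bd.card = ∑ _j ∈ Bd, (m-1) := by rw [Finset.sum_const, smul_eq_mul, mul_comm]
    _ ≤ ∑ j ∈ Bd, ((a j.castSucc : ℕ) + (a j.succ : ℕ)) := by
        refine Finset.sum_le_sum (fun j hj => ?_)
        rw [hB, Finset.mem_filter] at hj
        omega
    _ ≤ ∑ j : Fin ℓ, ((a j.castSucc : ℕ) + (a j.succ : ℕ)) :=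
        Finset.sum_le_sum_of_subset (Finset.filter_subset _ _)
    _ = (∑ j : Fin ℓ, (a j.castSucc : ℕ)) + ∑ j : Fin ℓ, (a j.succ : ℕ) :=
        Finset.sum_add_distrib
    _ ≤ 2 * t := by
        have h1 : ∑ j : Fin ℓ, (a j.castSucc : ℕ) ≤ t := by
          rw [htdef, Fin.sum_univ_castSucc (f := fun i => (a i : ℕ))]
          omega
        have h2 : ∑ j : Fin ℓ, (a j.succ : ℕ) ≤ t := by
          rw [htdef, Fin.sum_univ_succ (f := fun i => (a i : ℕ))]
          omega
        omega
  have hsub : (m-1) * q = m * q - q := Nat.sub_one_mul m q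
  have h2t : 2 * t + 1 ≤ (m-1) * q := by omega
  have hBq : Bd.card < q := Nat.lt_of_mul_lt_mul_left (a := m-1) (by omega)
  omega

lemma C_succ_le {m k : ℕ} (hm : 2 ≤ m) (ℓ : ℕ) (hq : k + (k+m-1)/m ≤ 2*ℓ + 1) :
    C m k (ℓ+1) ≤ C m k ℓ := by
  by_cases hk : k ≤ ℓ
  · have he : (univ.filter (fun f : Fin (ℓ+1) → Fin m => ∑ i, ((f i : ℕ) + 1) = k)) = ∅ := by
      rw [Finset.filter_eq_empty_iff]
      intro f _
      have : ℓ+1 ≤ ∑ i, ((f i : ℕ) + 1) := by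
        calc ℓ+1 = ∑ _i : Fin (ℓ+1), 1 := by simp
        _ ≤ _ := Finset.sum_le_sum (fun i _ => by omega)
      omega
    unfold C
    rw [he]
    simp
  push_neg at hk
  classical
  set S₁ : Finset ((Fin (ℓ+1) → Fin m) × Fin ℓ) :=
    univ.filter (fun z => (∑ i, ((z.1 i : ℕ)+1) = k) ∧
      (z.1 z.2.castSucc : ℕ) + (z.1 z.2.succ : ℕ) + 2 ≤ m) with hS₁
  set S₂ : Finset ((Fin ℓ → Fin m) × Fin ℓ × Fin m) :=
    univ.filter (fun z => (∑ i, ((z.1 i : ℕ)+1) = k) ∧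
      (z.2.2 : ℕ) < (z.1 z.2.1 : ℕ)) with hS₂
  -- (1) lower bound for S₁.card
  have h1 : C m k (ℓ+1) * (k - ℓ) ≤ S₁.card := by
    have hcard : S₁.card = ∑ a : Fin (ℓ+1) → Fin m,
        (if (∑ i, ((a i : ℕ)+1) = k) then
          (univ.filter (fun j : Fin ℓ =>
            (a j.castSucc : ℕ) + (a j.succ : ℕ) + 2 ≤ m)).card else 0) := by
      rw [hS₁, Finset.card_filter, Fintype.sum_prod_type]
      refine Finset.sum_congr rfl (fun a _ => ?_)
      by_cases hP : (∑ i, ((a i : ℕ)+1) = k)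
      · simp only [hP, true_and, if_true, Finset.card_filter]
      · simp [hP]
    rw [hcard]
    have : C m k (ℓ+1) * (k - ℓ) = ∑ a : Fin (ℓ+1) → Fin m,
        (if (∑ i, ((a i : ℕ)+1) = k) then (k - ℓ) else 0) := by
      rw [← Finset.sum_filter, Finset.sum_const, smul_eq_mul]
      rfl
    rw [this]
    refine Finset.sum_le_sum (fun a _ => ?_)
    by_cases hP : (∑ i, ((a i : ℕ)+1) = k)
    · simp only [hP, if_true]
      exact many_good hm hq a hP
    · simp [hP]
  -- (2) injection S₁ → S₂
  have h2 : S₁.card ≤ S₂.card := by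
    refine Finset.card_le_card_of_injOn
      (fun z => (mrg z.1 z.2, z.2, z.1 z.2.castSucc)) ?_ ?_
    · intro z hz
      obtain ⟨a, j⟩ := z
      rw [Finset.mem_coe, hS₁, Finset.mem_filter] at hz
      obtain ⟨-, hsum, hg⟩ := hz
      rw [Finset.mem_coe, hS₂, Finset.mem_filter]
      refine ⟨mem_univ _, mrg_sum a j hg hsum, ?_⟩
      have := mrg_val_self a j hg
      simpa using (by omega : (a j.castSucc : ℕ) < (mrg a j j : ℕ))
    · intro z hz z' hz' heq
      obtain ⟨a, j⟩ := z
      obtain ⟨a', j'⟩ := z'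
      simp only [hS₁, Finset.coe_filter, Finset.mem_coe, Finset.mem_filter,
        Finset.mem_univ, true_and, Set.mem_setOf_eq] at hz hz'
      obtain ⟨hsum, hg⟩ := hz
      obtain ⟨hsum', hg'⟩ := hz'
      have hm1 : mrg a j = mrg a' j' := congrArg Prod.fst heq
      have hj : j = j' := congrArg (fun w => w.2.1) heq
      have hx : a j.castSucc = a' j'.castSucc := congrArg (fun w => w.2.2) heq
      subst hj
      have hcv : (a j.castSucc : ℕ) = (a' j.castSucc : ℕ) := by rw [hx]
      have hvj : (mrg a j j : ℕ) = (mrg a' j j : ℕ) := by rw [hm1]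
      have hv1 := mrg_val_self a j hg
      have hv2 := mrg_val_self a' j hg'
      have hsv : (a j.succ : ℕ) = (a' j.succ : ℕ) := by omega
      have hfa : a = a' := by
        funext p
        by_cases hp : p = j.succ
        · subst hp; exact Fin.val_injective hsv
        · obtain ⟨i, hi⟩ := Fin.exists_succAbove_eq hp
          by_cases hij : i = j
          · subst hij
            rw [← hi, succAbove_succ_self]
            exact Fin.val_injective hcv
          · have := congrFun hm1 i
            simp only [mrg, if_neg hij] at this
            rw [← hi]
            exact this
      rw [hfa]
  -- (3) exact count of S₂
  have h3 : S₂.card = C m k ℓ * (k - ℓ) := by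
    have hcard : S₂.card = ∑ c : Fin ℓ → Fin m,
        (if (∑ i, ((c i : ℕ)+1) = k) then ∑ j : Fin ℓ, (c j : ℕ) else 0) := by
      rw [hS₂, Finset.card_filter, Fintype.sum_prod_type]
      refine Finset.sum_congr rfl (fun c _ => ?_)
      by_cases hP : (∑ i, ((c i : ℕ)+1) = k)
      · simp only [hP, true_and, if_true, Fintype.sum_prod_type]
        refine Finset.sum_congr rfl (fun j _ => ?_)
        have hv : (c j : ℕ) ≤ m := le_of_lt (c j).isLt
        rw [Fin.sum_univ_eq_sum_range (fun x => if x < (c j : ℕ) then 1 else 0) m]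
        rw [← Finset.card_filter]
        have : (Finset.range m).filter (fun x => x < (c j : ℕ)) = Finset.range (c j : ℕ) := by
          ext x
          simp only [Finset.mem_filter, Finset.mem_range]
          omega
        rw [this, Finset.card_range]
      · simp [hP]
    rw [hcard]
    have : C m k ℓ * (k - ℓ) = ∑ c : Fin ℓ → Fin m,
        (if (∑ i, ((c i : ℕ)+1) = k) then (k - ℓ) else 0) := by
      rw [← Finset.sum_filter, Finset.sum_const, smul_eq_mul]
      rfl
    rw [this]
    apply Finset.sum_congr rfl
    intro c _
    by_cases hP : (∑ i, ((c i : ℕ)+1) = k)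
    · simp only [hP, if_true]
      have h5 : ∑ i, ((c i : ℕ)+1) = (∑ i, (c i : ℕ)) + ℓ := by
        rw [Finset.sum_add_distrib, Finset.sum_const, card_univ, Fintype.card_fin,
          smul_eq_mul, mul_one]
      exact Nat.eq_sub_of_add_eq (h5.symm.trans hP)
    · simp [hP]
  have := h1.trans (h2.trans_eq h3)
  exact Nat.le_of_mul_le_mul_right this (by omega)

lemma C_le_of_le {m k L : ℕ} (hm : 2 ≤ m) (hL : k + (k+m-1)/m ≤ 2*L + 1) :
    ∀ j, L ≤ j → C m k j ≤ C m k L := by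
  intro j hj
  induction j, hj using Nat.le_induction with
  | base => exact le_rfl
  | succ n hn ih =>
      exact le_trans (C_succ_le hm n (by omega)) ih

theorem stmt_9 (k m : ℕ) (hk : 2 ≤ k) (hm : 2 ≤ m) :
    2 * alpha m k ≤ k + (k + m - 1) / m := by
  set q := (k + m - 1) / m with hqdef
  have hmq : k ≤ m * q ∧ m * q ≤ k + m - 1 := by
    rw [hqdef]
    have h1 := Nat.div_add_mod (k+m-1) m
    have h2 : (k+m-1) % m < m := Nat.mod_lt _ (by omega)
    omega
  have hq1 : 1 ≤ q := by
    rcases Nat.eq_zero_or_pos q with h | h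
    · exfalso; rw [h] at hmq; omega
    · exact h
  have hqk : q < k := by
    by_contra hcon
    push_neg at hcon
    have h1 : m * k ≤ m * q := Nat.mul_le_mul_left m hcon
    have h2 : m * k = m * (k-1) + m := by
      have : k - 1 + 1 = k := by omega
      calc m * k = m * ((k-1)+1) := by rw [this]
      _ = m * (k-1) + m := by ring
    have h3 : 2 * (k-1) ≤ m * (k-1) := Nat.mul_le_mul_right _ hm
    omega
  set L := (k + q) / 2 with hLdef
  have hL1 : k + q ≤ 2 * L + 1 := by omega
  have hL2 : q ≤ L ∧ L ≤ k := by omega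
  -- the sup is attained
  have hne : (Finset.Icc q k).Nonempty := ⟨q, by simp; omega⟩
  obtain ⟨i0, hi0mem, hi0⟩ := Finset.exists_mem_eq_sup (Finset.Icc q k) hne (C m k)
  have hSnon : ∃ w ∈ {i | i ∈ Finset.Icc q k ∧
      C m k i = (Finset.Icc q k).sup (C m k)}, w ≤ L := by
    by_cases hcase : i0 ≤ L
    · exact ⟨i0, ⟨hi0mem, hi0.symm⟩, hcase⟩
    · push_neg at hcase
      refine ⟨L, ⟨?_, ?_⟩, le_rfl⟩
      · simp only [Finset.mem_Icc]; omega
      · refine le_antisymm ?_ ?_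
        · exact Finset.le_sup (by simp only [Finset.mem_Icc]; omega)
        · rw [hi0]
          exact C_le_of_le hm hL1 i0 (le_of_lt hcase)
  obtain ⟨w, hw, hwL⟩ := hSnon
  have halpha : alpha m k ≤ w := Nat.sInf_le hw
  have : 2 * L ≤ k + q := by omega
  calc 2 * alpha m k ≤ 2 * w := by omega
  _ ≤ 2 * L := by omega
  _ ≤ k + q := this
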